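/- (L¹-stability.) If the CFL condition λ ≤ min{(8 − 27α)/(27L), 2/(27L), α/L} holds, then the MUSCL–Hancock update conserves mass and the discrete L¹ norm: Σ_{j∈ℤ} ρ'_j = Σ_{j∈ℤ} ρ_j and Σ_{j∈ℤ} |ρ'_j| = Σ_{j∈ℤ} |ρ_j|. -/

import Mathlib

open MeasureTheory

noncomputable section

/-- minmod limiter of three arguments. -/
def minmod3 (a b c : ℝ) : ℝ :=
  if 0 < a ∧ 0 < b ∧ 0 < c then min a (min b c)
  else if a < 0 ∧ b < 0 ∧ c < 0 then max a (max b c)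
  else 0

/-- MUSCL slopes `σ_j = 2θ·minmod(ρ_j − ρ_{j−1}, (ρ_{j+1} − ρ_{j−1})/2, ρ_{j+1} − ρ_j)`. -/
def slp (θ : ℝ) (ρ : ℤ → ℝ) (j : ℤ) : ℝ :=
  2 * θ * minmod3 (ρ j - ρ (j - 1)) ((ρ (j + 1) - ρ (j - 1)) / 2) (ρ (j + 1) - ρ j)

/-- left interface value `ρ⁻_{j+1/2} = ρ_j + σ_j/2`. -/
def intL (θ : ℝ) (ρ : ℤ → ℝ) (j : ℤ) : ℝ := ρ j + slp θ ρ j / 2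

/-- right interface value `ρ⁺_{j−1/2} = ρ_j − σ_j/2`. -/
def intR (θ : ℝ) (ρ : ℤ → ℝ) (j : ℤ) : ℝ := ρ j - slp θ ρ j / 2

/-- discrete convolution `A_j = Δx·Σ_l μ((j−l)Δx)·ρ_l`. -/
def Adisc (μ : ℝ → ℝ) (Δx : ℝ) (ρ : ℤ → ℝ) (j : ℤ) : ℝ :=
  Δx * ∑' l : ℤ, μ (((j : ℝ) - (l : ℝ)) * Δx) * ρ l

/-- `s_j = θ·(A_{j+1} − A_{j−1})`. -/
def sdisc (μ : ℝ → ℝ) (θ Δx : ℝ) (ρ : ℤ → ℝ) (j : ℤ) : ℝ :=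
  θ * (Adisc μ Δx ρ (j + 1) - Adisc μ Δx ρ (j - 1))

/-- `A⁻_{j+1/2} = A_j + s_j/2`. -/
def AdiscL (μ : ℝ → ℝ) (θ Δx : ℝ) (ρ : ℤ → ℝ) (j : ℤ) : ℝ :=
  Adisc μ Δx ρ j + sdisc μ θ Δx ρ j / 2

/-- `A⁺_{j−1/2} = A_j − s_j/2`. -/
def AdiscR (μ : ℝ → ℝ) (θ Δx : ℝ) (ρ : ℤ → ℝ) (j : ℤ) : ℝ :=
  Adisc μ Δx ρ j - sdisc μ θ Δx ρ j / 2

/-- mid-time value `ρ^{½,−}_{j+1/2}`. -/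
def midL (f : ℝ → ℝ → ℝ) (μ : ℝ → ℝ) (θ lam Δx : ℝ) (ρ : ℤ → ℝ) (j : ℤ) : ℝ :=
  intL θ ρ j - lam / 2 *
    (f (intL θ ρ j) (AdiscL μ θ Δx ρ j) - f (intR θ ρ j) (AdiscR μ θ Δx ρ j))

/-- mid-time value `ρ^{½,+}_{j−1/2}`. -/
def midR (f : ℝ → ℝ → ℝ) (μ : ℝ → ℝ) (θ lam Δx : ℝ) (ρ : ℤ → ℝ) (j : ℤ) : ℝ :=
  intR θ ρ j - lam / 2 *
    (f (intL θ ρ j) (AdiscL μ θ Δx ρ j) - f (intR θ ρ j) (AdiscR μ θ Δx ρ j))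

/-- mid-time convolution `A^{½}_{j+1/2}`. -/
def Amid (f : ℝ → ℝ → ℝ) (μ : ℝ → ℝ) (θ lam Δx : ℝ) (ρ : ℤ → ℝ) (j : ℤ) : ℝ :=
  Δx / 2 * ∑' l : ℤ,
    (μ (((j : ℝ) + 1 - (l : ℝ)) * Δx) * midR f μ θ lam Δx ρ l +
     μ (((j : ℝ) - (l : ℝ)) * Δx) * midL f μ θ lam Δx ρ l)

/-- Lax–Friedrichs type numerical flux `F(u,v,A)`. -/
def numFlux (f : ℝ → ℝ → ℝ) (α lam u v A : ℝ) : ℝ :=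
  (f u A + f v A) / 2 - α * (v - u) / (2 * lam)

/-- MUSCL–Hancock update `ρ'_j`. -/
def mhUpdate (f : ℝ → ℝ → ℝ) (μ : ℝ → ℝ) (θ α lam Δx : ℝ) (ρ : ℤ → ℝ) (j : ℤ) : ℝ :=
  ρ j - lam *
    (numFlux f α lam (midL f μ θ lam Δx ρ j) (midR f μ θ lam Δx ρ (j + 1))
        (Amid f μ θ lam Δx ρ j) -
     numFlux f α lam (midL f μ θ lam Δx ρ (j - 1)) (midR f μ θ lam Δx ρ j)
        (Amid f μ θ lam Δx ρ (j - 1)))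

/-- L¹-stability (mass conservation) of the MUSCL–Hancock update. -/
lemma int_bounds (θ : ℝ) (ρ : ℤ → ℝ) (j : ℤ) (hθ0 : 0 ≤ θ) (hθ1 : θ ≤ 1 / 2)
    (hρ : ∀ j : ℤ, 0 ≤ ρ j) :
    (1 - θ) * ρ j ≤ intL θ ρ j ∧ (1 - θ) * ρ j ≤ intR θ ρ j ∧
      intL θ ρ j + intR θ ρ j = 2 * ρ j := by
  have hsum : intL θ ρ j + intR θ ρ j = 2 * ρ j := by unfold intL intR; ring
  set m := minmod3 (ρ j - ρ (j - 1)) ((ρ (j + 1) - ρ (j - 1)) / 2) (ρ (j + 1) - ρ j) with hm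
  have hL : intL θ ρ j = ρ j + θ * m := by unfold intL slp; rw [← hm]; ring
  have hR : intR θ ρ j = ρ j - θ * m := by unfold intR slp; rw [← hm]; ring
  have h1 := hρ (j - 1); have h2 := hρ j; have h3 := hρ (j + 1)
  have hfacts : (0 < m ∧ m ≤ ρ j - ρ (j - 1) ∧ m ≤ ρ (j + 1) - ρ j) ∨
      (m < 0 ∧ ρ j - ρ (j - 1) ≤ m ∧ ρ (j + 1) - ρ j ≤ m) ∨ m = 0 := by
    unfold minmod3 at hm
    split_ifs at hm with hc1 hc2
    · exact Or.inl ⟨hm ▸ lt_min hc1.1 (lt_min hc1.2.1 hc1.2.2), hm ▸ min_le_left _ _,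
        hm ▸ (min_le_right _ _).trans (min_le_right _ _)⟩
    · exact Or.inr (Or.inl ⟨hm ▸ max_lt hc2.1 (max_lt hc2.2.1 hc2.2.2),
        hm ▸ le_max_left _ _,
        hm ▸ (le_max_right _ _).trans (le_max_right (ρ j - ρ (j - 1)) _)⟩)
    · exact Or.inr (Or.inr hm)
  refine ⟨?_, ?_, hsum⟩
  · rw [hL]
    rcases hfacts with ⟨h4, h5, h6⟩ | ⟨h4, h5, h6⟩ | h4
    · nlinarith [mul_nonneg hθ0 h2, mul_nonneg hθ0 h4.le]
    · nlinarith [mul_nonneg hθ0 h2, mul_le_mul_of_nonneg_left h6 hθ0]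
    · rw [h4]; nlinarith [mul_nonneg hθ0 h2]
  · rw [hR]
    rcases hfacts with ⟨h4, h5, h6⟩ | ⟨h4, h5, h6⟩ | h4
    · nlinarith [mul_nonneg hθ0 h2, mul_le_mul_of_nonneg_left h5 hθ0]
    · nlinarith [mul_nonneg hθ0 h2, mul_nonneg hθ0 (neg_nonneg.mpr h4.le)]
    · rw [h4]; nlinarith [mul_nonneg hθ0 h2]

lemma mid_bounds (f : ℝ → ℝ → ℝ) (μ : ℝ → ℝ) (θ lam Δx L : ℝ) (ρ : ℤ → ℝ) (j : ℤ)
    (hθ0 : 0 ≤ θ) (hθ1 : θ ≤ 1 / 2) (hlam : 0 ≤ lam) (hLpos : 0 ≤ L)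
    (habs : ∀ u A : ℝ, |f u A| ≤ L * |u|) (hK : lam * L ≤ 2 / 27)
    (hρ : ∀ j : ℤ, 0 ≤ ρ j) :
    0 ≤ midL f μ θ lam Δx ρ j ∧ 0 ≤ midR f μ θ lam Δx ρ j ∧
      midL f μ θ lam Δx ρ j + midR f μ θ lam Δx ρ j ≤ (2 + 2 * (lam * L)) * ρ j ∧
      midL f μ θ lam Δx ρ j ≤ 3 * ρ j ∧ midR f μ θ lam Δx ρ j ≤ 3 * ρ j := by
  obtain ⟨hIL, hIR, hIsum⟩ := int_bounds θ ρ j hθ0 hθ1 hρ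
  have hρj := hρ j
  have hIL0 : 0 ≤ intL θ ρ j := le_trans (by nlinarith) hIL
  have hIR0 : 0 ≤ intR θ ρ j := le_trans (by nlinarith) hIR
  have hIL2 : intL θ ρ j ≤ 2 * ρ j := by linarith
  have hIR2 : intR θ ρ j ≤ 2 * ρ j := by linarith
  have hfl := habs (intL θ ρ j) (AdiscL μ θ Δx ρ j)
  have hfr := habs (intR θ ρ j) (AdiscR μ θ Δx ρ j)
  rw [abs_of_nonneg hIL0] at hfl
  rw [abs_of_nonneg hIR0] at hfr
  have hfl' := abs_le.mp hfl
  have hfr' := abs_le.mp hfr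
  -- |D| ≤ lam * L * ρ j where D = lam/2 * (fL - fR)
  have hD : |lam / 2 * (f (intL θ ρ j) (AdiscL μ θ Δx ρ j)
      - f (intR θ ρ j) (AdiscR μ θ Δx ρ j))| ≤ lam * L * ρ j := by
    rw [abs_mul, abs_of_nonneg (by linarith : (0:ℝ) ≤ lam / 2)]
    have h1 : |f (intL θ ρ j) (AdiscL μ θ Δx ρ j)
        - f (intR θ ρ j) (AdiscR μ θ Δx ρ j)| ≤ L * intL θ ρ j + L * intR θ ρ j :=
      (abs_sub _ _).trans (by linarith)
    have h2 : L * intL θ ρ j + L * intR θ ρ j = L * (2 * ρ j) := by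
      rw [← mul_add, hIsum]
    nlinarith [mul_le_mul_of_nonneg_left (h2 ▸ h1) (by linarith : (0:ℝ) ≤ lam / 2)]
  have hD' := abs_le.mp hD
  have hKρ : lam * L * ρ j ≤ 2 / 27 * ρ j := mul_le_mul_of_nonneg_right hK hρj
  have hθρ : (1 - θ) * ρ j ≥ 1 / 2 * ρ j := by nlinarith
  unfold midL midR
  refine ⟨by linarith, by linarith, by linarith, by linarith, by linarith⟩

set_option maxHeartbeats 1000000 in
lemma mh_exp (f : ℝ → ℝ → ℝ) (μ : ℝ → ℝ) (θ α lam Δx : ℝ) (ρ : ℤ → ℝ) (j : ℤ)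
    (hlam : lam ≠ 0) :
    mhUpdate f μ θ α lam Δx ρ j =
      ρ j - lam / 2 * (f (midL f μ θ lam Δx ρ j) (Amid f μ θ lam Δx ρ j)
          + f (midR f μ θ lam Δx ρ (j + 1)) (Amid f μ θ lam Δx ρ j)
          - f (midL f μ θ lam Δx ρ (j - 1)) (Amid f μ θ lam Δx ρ (j - 1))
          - f (midR f μ θ lam Δx ρ j) (Amid f μ θ lam Δx ρ (j - 1)))
        + α / 2 * (midR f μ θ lam Δx ρ (j + 1) - midL f μ θ lam Δx ρ j)
        - α / 2 * (midR f μ θ lam Δx ρ j - midL f μ θ lam Δx ρ (j - 1)) := by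
  unfold mhUpdate numFlux
  generalize f (midL f μ θ lam Δx ρ j) (Amid f μ θ lam Δx ρ j) = a1
  generalize f (midR f μ θ lam Δx ρ (j + 1)) (Amid f μ θ lam Δx ρ j) = a2
  generalize f (midL f μ θ lam Δx ρ (j - 1)) (Amid f μ θ lam Δx ρ (j - 1)) = b1
  generalize f (midR f μ θ lam Δx ρ j) (Amid f μ θ lam Δx ρ (j - 1)) = b2
  generalize midL f μ θ lam Δx ρ j = P
  generalize midR f μ θ lam Δx ρ j = Q
  generalize midR f μ θ lam Δx ρ (j + 1) = R
  generalize midL f μ θ lam Δx ρ (j - 1) = S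
  field_simp
  ring

lemma mh_nonneg (f : ℝ → ℝ → ℝ) (μ : ℝ → ℝ) (θ α lam Δx L : ℝ) (ρ : ℤ → ℝ) (j : ℤ)
    (hθ0 : 0 ≤ θ) (hθ1 : θ ≤ 1 / 2) (hlam : 0 < lam) (hLpos : 0 ≤ L) (hα0 : 0 < α)
    (habs : ∀ u A : ℝ, |f u A| ≤ L * |u|) (hK : lam * L ≤ 2 / 27)
    (hKα : lam * L + α ≤ 8 / 27) (hαK : lam * L ≤ α)
    (hρ : ∀ j : ℤ, 0 ≤ ρ j) :
    0 ≤ mhUpdate f μ θ α lam Δx ρ j := by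
  obtain ⟨hP0, hQ0, hPQ, hP3, hQ3⟩ :=
    mid_bounds f μ θ lam Δx L ρ j hθ0 hθ1 hlam.le hLpos habs hK hρ
  obtain ⟨hS0, -, -, -, -⟩ :=
    mid_bounds f μ θ lam Δx L ρ (j - 1) hθ0 hθ1 hlam.le hLpos habs hK hρ
  obtain ⟨-, hR0, -, -, -⟩ :=
    mid_bounds f μ θ lam Δx L ρ (j + 1) hθ0 hθ1 hlam.le hLpos habs hK hρ
  rw [mh_exp f μ θ α lam Δx ρ j hlam.ne']
  have ha1 := abs_le.mp ((habs (midL f μ θ lam Δx ρ j) (Amid f μ θ lam Δx ρ j)).trans_eq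
    (by rw [abs_of_nonneg hP0]))
  have ha2 := abs_le.mp ((habs (midR f μ θ lam Δx ρ (j + 1)) (Amid f μ θ lam Δx ρ j)).trans_eq
    (by rw [abs_of_nonneg hR0]))
  have hb1 := abs_le.mp ((habs (midL f μ θ lam Δx ρ (j - 1))
    (Amid f μ θ lam Δx ρ (j - 1))).trans_eq (by rw [abs_of_nonneg hS0]))
  have hb2 := abs_le.mp ((habs (midR f μ θ lam Δx ρ j)
    (Amid f μ θ lam Δx ρ (j - 1))).trans_eq (by rw [abs_of_nonneg hQ0]))
  have hρj := hρ j
  revert ha1 ha2 hb1 hb2 hPQ hP0 hQ0 hR0 hS0 hP3 hQ3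
  generalize f (midL f μ θ lam Δx ρ j) (Amid f μ θ lam Δx ρ j) = a1
  generalize f (midR f μ θ lam Δx ρ (j + 1)) (Amid f μ θ lam Δx ρ j) = a2
  generalize f (midL f μ θ lam Δx ρ (j - 1)) (Amid f μ θ lam Δx ρ (j - 1)) = b1
  generalize f (midR f μ θ lam Δx ρ j) (Amid f μ θ lam Δx ρ (j - 1)) = b2
  generalize midL f μ θ lam Δx ρ j = P
  generalize midR f μ θ lam Δx ρ j = Q
  generalize midR f μ θ lam Δx ρ (j + 1) = R
  generalize midL f μ θ lam Δx ρ (j - 1) = S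
  intro hP0 hQ0 hPQ hP3 hQ3 hS0 hR0 ha1 ha2 hb1 hb2
  have e1 : lam / 2 * a1 ≤ lam / 2 * (L * P) :=
    mul_le_mul_of_nonneg_left ha1.2 (by linarith)
  have e2 : lam / 2 * a2 ≤ lam / 2 * (L * R) :=
    mul_le_mul_of_nonneg_left ha2.2 (by linarith)
  have e3 : lam / 2 * (-(L * S)) ≤ lam / 2 * b1 :=
    mul_le_mul_of_nonneg_left hb1.1 (by linarith)
  have e4 : lam / 2 * (-(L * Q)) ≤ lam / 2 * b2 :=
    mul_le_mul_of_nonneg_left hb2.1 (by linarith)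
  have hkey : (lam * L + α) * (P + Q) ≤ (lam * L + α) * ((2 + 2 * (lam * L)) * ρ j) :=
    mul_le_mul_of_nonneg_left hPQ (by positivity)
  have hkey2 : (lam * L + α) * ((2 + 2 * (lam * L)) * ρ j) ≤ 2 * ρ j := by
    nlinarith [mul_nonneg hlam.le hLpos]
  have hRS : 0 ≤ (α - lam * L) * R := mul_nonneg (by linarith) hR0
  have hRS' : 0 ≤ (α - lam * L) * S := mul_nonneg (by linarith) hS0
  nlinarith [e1, e2, e3, e4, hkey, hkey2, hRS, hRS']
theorem stmt5 (f : ℝ → ℝ → ℝ) (μ : ℝ → ℝ) (Δx Δt lam θ α L : ℝ)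
    (hΔx : 0 < Δx) (hΔt : 0 < Δt) (hlam : lam = Δt / Δx)
    (hθ0 : 0 ≤ θ) (hθ1 : θ ≤ 1 / 2) (hα0 : 0 < α) (hα1 : α < 8 / 27)
    (hf : ContDiff ℝ 2 (Function.uncurry f)) (hf0 : ∀ A : ℝ, f 0 A = 0)
    (hL : ∀ r A : ℝ, |deriv (fun x => f x A) r| ≤ L)
    (hμ : ContDiff ℝ 2 μ) (hμc : HasCompactSupport μ)
    (hCFL : lam ≤ min ((8 - 27 * α) / (27 * L)) (min (2 / (27 * L)) (α / L)))
    (ρ : ℤ → ℝ) (hρ : ∀ j : ℤ, 0 ≤ ρ j) (hsum : Summable ρ) :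
    (∑' j : ℤ, mhUpdate f μ θ α lam Δx ρ j) = ∑' j : ℤ, ρ j ∧
    (∑' j : ℤ, |mhUpdate f μ θ α lam Δx ρ j|) = ∑' j : ℤ, |ρ j| := by
  have hlam0 : 0 < lam := hlam ▸ div_pos hΔt hΔx
  have hL0 : 0 ≤ L := (abs_nonneg _).trans (hL 0 0)
  have hLpos : 0 < L := by
    rcases lt_or_eq_of_le hL0 with h | h
    · exact h
    · exfalso
      have := hCFL.trans (min_le_right _ _) |>.trans (min_le_right _ _)
      rw [← h, div_zero] at this
      linarith
  have h27L : (0:ℝ) < 27 * L := by linarith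
  have hK : lam * L ≤ 2 / 27 := by
    have h := hCFL.trans ((min_le_right _ _).trans (min_le_left _ _))
    rw [le_div_iff₀ h27L] at h
    nlinarith
  have hKα : lam * L + α ≤ 8 / 27 := by
    have h := hCFL.trans (min_le_left _ _)
    rw [le_div_iff₀ h27L] at h
    nlinarith
  have hαK : lam * L ≤ α := by
    have h := hCFL.trans ((min_le_right _ _).trans (min_le_right _ _))
    rw [le_div_iff₀ hLpos] at h
    exact h
  -- Lipschitz-type bound |f u A| ≤ L * |u|
  have habs : ∀ u A : ℝ, |f u A| ≤ L * |u| := by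
    intro u A
    have hdiff : ∀ x : ℝ, DifferentiableAt ℝ (fun x => f x A) x := by
      intro x
      have : (fun x => f x A) = Function.uncurry f ∘ fun x => (x, A) := rfl
      rw [this]
      exact (hf.differentiable two_ne_zero).differentiableAt.comp x
        ((differentiable_id.prodMk (differentiable_const A)) x)
    have := Convex.norm_image_sub_le_of_norm_deriv_le
      (f := fun x => f x A) (s := Set.univ) (fun x _ => hdiff x)
      (fun x _ => (Real.norm_eq_abs _) ▸ hL x A) convex_univ
      (Set.mem_univ (0:ℝ)) (Set.mem_univ u)
    simpa [hf0 A, Real.norm_eq_abs] using this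
  -- nonnegativity
  have hpos : ∀ j : ℤ, 0 ≤ mhUpdate f μ θ α lam Δx ρ j := fun j =>
    mh_nonneg f μ θ α lam Δx L ρ j hθ0 hθ1 hlam0 hL0 hα0 habs hK hKα hαK hρ
  -- fluxes and summability
  set Fp : ℤ → ℝ := fun j => numFlux f α lam (midL f μ θ lam Δx ρ j)
    (midR f μ θ lam Δx ρ (j + 1)) (Amid f μ θ lam Δx ρ j) with hFpdef
  have hshift : Summable (fun j : ℤ => ρ (j + 1)) := by
    exact (Equiv.addRight (1:ℤ)).summable_iff.mpr hsum
  have hb : Summable (fun j : ℤ => (L / 2 + α / (2 * lam)) * (3 * ρ j + 3 * ρ (j + 1))) :=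
    ((hsum.mul_left 3).add (hshift.mul_left 3)).mul_left _
  have hFpabs : Summable (fun j : ℤ => |Fp j|) := by
    refine Summable.of_nonneg_of_le (fun j => abs_nonneg _) (fun j => ?_) hb
    obtain ⟨hP0, -, -, hP3, -⟩ :=
      mid_bounds f μ θ lam Δx L ρ j hθ0 hθ1 hlam0.le hL0 habs hK hρ
    obtain ⟨-, hR0, -, -, hR3⟩ :=
      mid_bounds f μ θ lam Δx L ρ (j + 1) hθ0 hθ1 hlam0.le hL0 habs hK hρ
    set P := midL f μ θ lam Δx ρ j
    set R := midR f μ θ lam Δx ρ (j + 1)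
    have ha1 := (habs P (Amid f μ θ lam Δx ρ j)).trans_eq (by rw [abs_of_nonneg hP0])
    have ha2 := (habs R (Amid f μ θ lam Δx ρ j)).trans_eq (by rw [abs_of_nonneg hR0])
    have h1 : |Fp j| ≤ (L * P + L * R) / 2 + α * (R + P) / (2 * lam) := by
      rw [hFpdef]
      unfold numFlux
      refine (abs_sub _ _).trans (add_le_add ?_ ?_)
      · rw [abs_div, abs_of_nonneg (by norm_num : (0:ℝ) ≤ 2)]
        have h2 := (abs_add_le (f P (Amid f μ θ lam Δx ρ j)) (f R (Amid f μ θ lam Δx ρ j))).trans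
          (add_le_add ha1 ha2)
        exact div_le_div_of_nonneg_right h2 (by norm_num) |>.trans_eq rfl
      · rw [abs_div, abs_mul, abs_of_nonneg hα0.le,
          abs_of_nonneg (by linarith : (0:ℝ) ≤ 2 * lam)]
        apply div_le_div_of_nonneg_right _ (by linarith)
        have h3 : |R - P| ≤ R + P := (abs_sub _ _).trans
          (by rw [abs_of_nonneg hR0, abs_of_nonneg hP0])
        exact mul_le_mul_of_nonneg_left h3 hα0.le
    refine h1.trans ?_
    have hρj := hρ j; have hρj1 := hρ (j + 1)
    have hα2 : 0 ≤ α / (2 * lam) := by positivity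
    have heq : (L * P + L * R) / 2 + α * (R + P) / (2 * lam)
        = L / 2 * P + L / 2 * R + α / (2 * lam) * P + α / (2 * lam) * R := by ring
    rw [heq]
    nlinarith [mul_le_mul_of_nonneg_left hP3 (by linarith : (0:ℝ) ≤ L / 2),
      mul_le_mul_of_nonneg_left hR3 (by linarith : (0:ℝ) ≤ L / 2),
      mul_le_mul_of_nonneg_left hP3 hα2, mul_le_mul_of_nonneg_left hR3 hα2]
  have hFp : Summable Fp := summable_abs_iff.mp hFpabs
  have hFm : Summable (fun j : ℤ => Fp (j - 1)) := by
    exact hFp.comp_injective (sub_left_injective (b := (1:ℤ)))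
  have hupd : ∀ j : ℤ, mhUpdate f μ θ α lam Δx ρ j = ρ j - lam * (Fp j - Fp (j - 1)) := by
    intro j
    have hj : j - 1 + 1 = j := by ring
    rw [hFpdef]
    simp only [mhUpdate, hj]
  have htel : ∑' j : ℤ, Fp (j - 1) = ∑' j : ℤ, Fp j := by
    simpa using (Equiv.subRight (1:ℤ)).tsum_eq Fp
  have hmass : (∑' j : ℤ, mhUpdate f μ θ α lam Δx ρ j) = ∑' j : ℤ, ρ j := by
    calc (∑' j : ℤ, mhUpdate f μ θ α lam Δx ρ j)
        = ∑' j : ℤ, (ρ j - lam * (Fp j - Fp (j - 1))) := tsum_congr hupd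
      _ = (∑' j : ℤ, ρ j) - ∑' j : ℤ, lam * (Fp j - Fp (j - 1)) :=
          Summable.tsum_sub hsum (((hFp.sub hFm)).mul_left lam)
      _ = (∑' j : ℤ, ρ j) - lam * ((∑' j : ℤ, Fp j) - ∑' j : ℤ, Fp (j - 1)) := by
          rw [tsum_mul_left, Summable.tsum_sub hFp hFm]
      _ = ∑' j : ℤ, ρ j := by rw [htel]; ring
  refine ⟨hmass, ?_⟩
  calc (∑' j : ℤ, |mhUpdate f μ θ α lam Δx ρ j|)
      = ∑' j : ℤ, mhUpdate f μ θ α lam Δx ρ j := tsum_congr fun j => abs_of_nonneg (hpos j)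
    _ = ∑' j : ℤ, ρ j := hmass
    _ = ∑' j : ℤ, |ρ j| := (tsum_congr fun j => abs_of_nonneg (hρ j)).symm
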